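/- (Weighted Brouwer bound for trees.) Let T be a tree on n vertices with nonnegative edge weights, with adjacency matrix A supported on the edges of T, and let ω_1 ≥ ω_2 ≥ ⋯ ≥ ω_{n−1} ≥ 0 be the decreasing order of the edge weights, extended by ω_n = ⋯ = ω_{2n−1} = 0. Let e(T) = Σ_{i=1}^{n−1} ω_i be the total edge weight. Then for every k ∈ [n] and every orthonormal family u_1, …, u_k of vectors in ℝ^n, Σ_{i=1}^k u_iᵀ L_T u_i ≤ e(T) + Σ_{i=1}^{2k−1} ω_i; that is, the sum of the k largest eigenvalues of the Laplacian L_T is at most e(T) + Σ_{i=1}^{2k−1} ω_i. -/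

import Mathlib

open Matrix

/-- The Laplacian matrix of a weighted graph with (symmetric, zero-diagonal)
adjacency matrix `A`: `L_A = D - A` where `D` is the diagonal matrix of row sums. -/
def lap {n : ℕ} (A : Matrix (Fin n) (Fin n) ℝ) : Matrix (Fin n) (Fin n) ℝ :=
  Matrix.diagonal (fun i => ∑ j, A i j) - A

section auxiliary
open Finset SimpleGraph
open scoped Classical

section core
variable {n k : ℕ}

def xd (u : Fin k → Fin n → ℝ) (v : Fin n) : ℝ := ∑ i, (u i v)^2
def pd (u : Fin k → Fin n → ℝ) (v w : Fin n) : ℝ := ∑ i, u i v * u i w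

lemma xd_nonneg (u : Fin k → Fin n → ℝ) (v : Fin n) : 0 ≤ xd u v :=
  Finset.sum_nonneg fun i _ => sq_nonneg _

/-- Bessel's inequality, plain-sum form. -/
lemma bessel (u : Fin k → Fin n → ℝ)
    (horth : ∀ i j, (∑ a, u i a * u j a) = if i = j then (1:ℝ) else 0)
    (w : Fin n → ℝ) : ∑ i, (∑ a, u i a * w a)^2 ≤ ∑ a, (w a)^2 := by
  set c : Fin k → ℝ := fun i => ∑ a, u i a * w a with hc
  have key : ∑ a, (w a - ∑ i, c i * u i a)^2
      = ∑ a, (w a)^2 - ∑ i, (c i)^2 := by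
    have e1 : ∀ a, (w a - ∑ i, c i * u i a)^2
        = (w a)^2 - 2 * (∑ i, c i * (u i a * w a)) + (∑ i, c i * u i a) * (∑ j, c j * u j a) := by
      intro a
      have : (∑ i, c i * (u i a * w a)) = (∑ i, c i * u i a) * w a := by
        rw [Finset.sum_mul]; exact Finset.sum_congr rfl fun i _ => by ring
      rw [this]; ring
    rw [Finset.sum_congr rfl fun a _ => e1 a]
    rw [Finset.sum_add_distrib, Finset.sum_sub_distrib]
    have e2 : ∑ a, 2 * (∑ i, c i * (u i a * w a)) = 2 * ∑ i, (c i)^2 := by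
      rw [← Finset.mul_sum, Finset.sum_comm]
      congr 1
      refine Finset.sum_congr rfl fun i _ => ?_
      rw [← Finset.mul_sum]
      rw [show (∑ a, u i a * w a) = c i from rfl, sq]
    have e3 : ∑ a, (∑ i, c i * u i a) * (∑ j, c j * u j a) = ∑ i, (c i)^2 := by
      have : ∀ a, (∑ i, c i * u i a) * (∑ j, c j * u j a)
          = ∑ i, ∑ j, (c i * c j) * (u i a * u j a) := by
        intro a; rw [Finset.sum_mul_sum]
        exact Finset.sum_congr rfl fun i _ => Finset.sum_congr rfl fun j _ => by ring
      rw [Finset.sum_congr rfl fun a _ => this a, Finset.sum_comm]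
      have : ∀ i, ∑ a, ∑ j, (c i * c j) * (u i a * u j a) = ∑ j, (c i * c j) * ∑ a, u i a * u j a := by
        intro i; rw [Finset.sum_comm]
        exact Finset.sum_congr rfl fun j _ => (Finset.mul_sum _ _ _).symm
      rw [Finset.sum_congr rfl fun i _ => this i]
      refine Finset.sum_congr rfl fun i _ => ?_
      simp only [horth]
      rw [Finset.sum_eq_single i]
      · simp [sq]
      · intro j _ hj; simp [if_neg (Ne.symm hj)]
      · simp
    rw [e2, e3]; ring
  have h0 : 0 ≤ ∑ a, (w a - ∑ i, c i * u i a)^2 := Finset.sum_nonneg fun a _ => sq_nonneg _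
  rw [key] at h0
  linarith

lemma xd_le_one (u : Fin k → Fin n → ℝ)
    (horth : ∀ i j, (∑ a, u i a * u j a) = if i = j then (1:ℝ) else 0)
    (v : Fin n) : xd u v ≤ 1 := by
  have := bessel u horth (fun a => if a = v then 1 else 0)
  have h1 : ∀ i : Fin k, (∑ a, u i a * (if a = v then (1:ℝ) else 0)) = u i v := by
    intro i; simp [mul_ite]
  have h2 : (∑ a : Fin n, ((if a = v then (1:ℝ) else 0))^2) = 1 := by
    simp [ite_pow]
  rw [h2] at this
  simpa [xd, h1] using this

/-- `c_{ab} ≤ 2` : Bessel at the difference of indicators. -/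
lemma edge_le_two (u : Fin k → Fin n → ℝ)
    (horth : ∀ i j, (∑ a, u i a * u j a) = if i = j then (1:ℝ) else 0)
    {a b : Fin n} (hab : a ≠ b) : ∑ i, (u i a - u i b)^2 ≤ 2 := by
  have := bessel u horth (fun z => (if z = a then 1 else 0) - if z = b then 1 else 0)
  have h1 : ∀ i : Fin k,
      (∑ z, u i z * ((if z = a then (1:ℝ) else 0) - if z = b then 1 else 0)) = u i a - u i b := by
    intro i
    have : ∀ z, u i z * ((if z = a then (1:ℝ) else 0) - if z = b then 1 else 0)
        = (if z = a then u i z else 0) - (if z = b then u i z else 0) := by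
      intro z; by_cases hz : z = a <;> by_cases hz' : z = b <;> simp [hz, hz'] <;> ring_nf <;>
        simp_all [hab]
    rw [Finset.sum_congr rfl fun z _ => this z, Finset.sum_sub_distrib]
    simp
  have h2 : (∑ z : Fin n, ((if z = a then (1:ℝ) else 0) - if z = b then 1 else 0)^2) = 2 := by
    have : ∀ z : Fin n, ((if z = a then (1:ℝ) else 0) - if z = b then 1 else 0)^2
        = (if z = a then 1 else 0) + (if z = b then 1 else 0) := by
      intro z; by_cases hz : z = a <;> by_cases hz' : z = b <;>
        simp_all [hab] <;> ring
    rw [Finset.sum_congr rfl fun z _ => this z, Finset.sum_add_distrib]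
    simp; norm_num
  rw [h2] at this
  calc ∑ i, (u i a - u i b)^2 = ∑ i, (∑ z, u i z * ((if z = a then (1:ℝ) else 0) - if z = b then 1 else 0))^2 := by
        exact (Finset.sum_congr rfl fun i _ => by rw [h1 i]).symm
    _ ≤ 2 := this

/-- row of the projection squared sums to diagonal -/
lemma pd_row (u : Fin k → Fin n → ℝ)
    (horth : ∀ i j, (∑ a, u i a * u j a) = if i = j then (1:ℝ) else 0)
    (v : Fin n) : ∑ w, (pd u v w)^2 = xd u v := by
  have e1 : ∀ w, (pd u v w)^2 = ∑ i, ∑ j, (u i v * u j v) * (u i w * u j w) := by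
    intro w
    rw [pd, sq, Finset.sum_mul_sum]
    exact Finset.sum_congr rfl fun i _ => Finset.sum_congr rfl fun j _ => by ring
  rw [Finset.sum_congr rfl fun w _ => e1 w, Finset.sum_comm]
  have e2 : ∀ i : Fin k, ∑ w, ∑ j, (u i v * u j v) * (u i w * u j w)
      = ∑ j, (u i v * u j v) * ∑ w, u i w * u j w := by
    intro i; rw [Finset.sum_comm]
    exact Finset.sum_congr rfl fun j _ => (Finset.mul_sum _ _ _).symm
  rw [Finset.sum_congr rfl fun i _ => e2 i]
  rw [xd]
  refine Finset.sum_congr rfl fun i _ => ?_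
  simp only [horth]
  rw [Finset.sum_eq_single i]
  · simp [sq]
  · intro j _ hj; simp [if_neg (Ne.symm hj)]
  · simp

end core


/-- scalar inequality for the star case -/
lemma star_scalar (s x σ Q R : ℝ) (hs : 1 ≤ s) (hsint : s = 1 ∨ 2 ≤ s)
    (hx0 : 0 ≤ x) (hx1 : x ≤ 1) (hσ : 0 ≤ σ) (hQ0 : 0 ≤ Q)
    (hQ1 : Q ≤ x - x^2) (hQ2 : Q ≤ x * σ) (hR : R^2 ≤ s * Q) :
    (s - 2) * x + 2 * R ≤ s - 1 + σ := by
  rcases le_or_gt (1 - x) σ with hcase | hcase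
  · -- σ ≥ 1 - x : use M = s - (s-1) x
    have hM : 0 ≤ s - (s - 1) * x := by nlinarith
    have h4 : 4 * R^2 ≤ (s - (s-1)*x)^2 := by nlinarith [sq_nonneg (s - (s+1)*x)]
    have h2R : 2 * R ≤ s - (s-1)*x := by nlinarith [sq_nonneg (2*R - (s - (s-1)*x))]
    nlinarith
  · -- σ < 1 - x
    have hM' : 0 ≤ s - 1 + σ - (s-2)*x := by
      rcases hsint with h1 | h2
      · nlinarith
      · nlinarith
    have h4 : 4 * R^2 ≤ (s - 1 + σ - (s-2)*x)^2 := by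
      rcases hsint with h1 | h2
      · subst h1; nlinarith [sq_nonneg (σ - x)]
      · nlinarith [sq_nonneg (1 - (s+1)*σ), mul_nonneg (mul_nonneg (sub_nonneg.2 h2) hσ)
          (sub_nonneg.2 hcase.le), mul_nonneg hσ hx0, sq_nonneg (s - 1 + σ - (s-2)*x),
          mul_nonneg (sub_nonneg.2 h2) (sub_nonneg.2 hcase.le)]
    have h2R : 2 * R ≤ s - 1 + σ - (s-2)*x := by
      nlinarith [sq_nonneg (2*R - (s - 1 + σ - (s-2)*x))]
    linarith


section graph
variable {n : ℕ}

noncomputable def suppF (S : Finset (Sym2 (Fin n))) : Finset (Fin n) :=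
  Finset.univ.filter (fun v => ∃ q ∈ S, v ∈ q)

lemma sym2_exists {α : Type*} (q : Sym2 α) : ∃ a b, q = s(a, b) :=
  Sym2.ind (fun a b => ⟨a, b, rfl⟩) q

lemma mem_suppF {S : Finset (Sym2 (Fin n))} {v : Fin n} :
    v ∈ suppF S ↔ ∃ q ∈ S, v ∈ q := by simp [suppF]

lemma suppF_mono {S T : Finset (Sym2 (Fin n))} (h : S ⊆ T) : suppF S ⊆ suppF T := by
  intro v hv; rw [mem_suppF] at *; obtain ⟨q, hq, hvq⟩ := hv; exact ⟨q, h hq, hvq⟩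

lemma reach_in_edge {S : Finset (Sym2 (Fin n))} {q : Sym2 (Fin n)} (hq : q ∈ S)
    (hnd : ¬ q.IsDiag) {x y : Fin n} (hx : x ∈ q) (hy : y ∈ q) :
    (fromEdgeSet (↑S : Set (Sym2 (Fin n)))).Reachable x y := by
  rcases eq_or_ne x y with rfl | hxy
  · exact Reachable.refl x
  · refine Adj.reachable ?_
    rw [fromEdgeSet_adj]
    refine ⟨?_, hxy⟩
    induction q using Sym2.ind with
    | _ a b =>
      rw [Sym2.mem_iff] at hx hy
      have : s(x, y) = s(a, b) := by
        rcases hx with rfl | rfl <;> rcases hy with rfl | rfl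
        · exact absurd rfl hxy
        · rfl
        · exact Sym2.eq_swap
        · exact absurd rfl hxy
      rw [this]; exact hq

/-- structure lemma: an acyclic nonstar edge set with ≥ 2 edges splits -/
lemma struct (S : Finset (Sym2 (Fin n)))
    (hnd : ∀ q ∈ S, ¬ q.IsDiag)
    (hacyc : (fromEdgeSet (↑S : Set (Sym2 (Fin n)))).IsAcyclic)
    (h2 : 2 ≤ S.card)
    (hnotstar : ¬ ∃ v, ∀ q ∈ S, v ∈ q) :
    ∃ A B : Finset (Sym2 (Fin n)), A.Nonempty ∧ B.Nonempty ∧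
      Disjoint (suppF A) (suppF B) ∧ Disjoint A B ∧
      ((S = A ∪ B) ∨ ∃ q0 ∈ S, q0 ∉ A ∪ B ∧ S = insert q0 (A ∪ B)) := by
  set H := fromEdgeSet (↑S : Set (Sym2 (Fin n))) with hH
  by_cases hconn : ∀ w ∈ suppF S, ∀ w' ∈ suppF S, H.Reachable w w'
  · -- connected case : find an internal edge
    -- step 1 : there is a vertex with two distinct incident edges
    have hx2 : ∃ x q1 q2, q1 ∈ S ∧ q2 ∈ S ∧ q1 ≠ q2 ∧ x ∈ q1 ∧ x ∈ q2 := by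
      obtain ⟨q1, hq1, q2, hq2, hq12⟩ := Finset.one_lt_card.1 h2
      by_cases hshare : ∃ p, p ∈ q1 ∧ p ∈ q2
      · obtain ⟨p, hp1, hp2⟩ := hshare
        exact ⟨p, q1, q2, hq1, hq2, hq12, hp1, hp2⟩
      · push_neg at hshare
        obtain ⟨a1, b1, rfl⟩ : ∃ a b, q1 = s(a, b) := sym2_exists q1
        obtain ⟨a2, b2, rfl⟩ : ∃ a b, q2 = s(a, b) := sym2_exists q2
        have ha1s : a1 ∈ suppF S := mem_suppF.2 ⟨_, hq1, Sym2.mem_mk_left _ _⟩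
        have ha2s : a2 ∈ suppF S := mem_suppF.2 ⟨_, hq2, Sym2.mem_mk_left _ _⟩
        have hreach := hconn a1 ha1s a2 ha2s
        have hne12 : a1 ≠ a2 := by
          intro h; exact hshare a1 (Sym2.mem_mk_left _ _) (h ▸ Sym2.mem_mk_left _ _)
        obtain ⟨p⟩ := hreach
        obtain ⟨w, hw⟩ := p.toPath
        -- w : path a1 → a2
        cases w with
        | nil => exact absurd rfl hne12
        | @cons _ c _ hadjxc rest =>
          have hedge1 : s(a1, c) ∈ S := by
            have := (fromEdgeSet_adj _).1 hadjxc
            exact this.1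
          by_cases heq : s(a1, c) = s(a1, b1)
          · -- first edge is q1 itself ; use second vertex c
            cases rest with
            | nil =>
              -- c = a2, but c ∈ q1, contradiction with no sharing
              exact (hshare a2 (by rw [← heq]; exact Sym2.mem_mk_right a1 a2)
                (Sym2.mem_mk_left a2 b2)).elim
            | @cons _ c3 _ hadjcc3 rest2 =>
              have hedge2 : s(c, c3) ∈ S := ((fromEdgeSet_adj _).1 hadjcc3).1
              have hne : s(a1, c) ≠ s(c, c3) := by
                intro h
                have : a1 ∈ s(c, c3) := h ▸ Sym2.mem_mk_left _ _
                rw [Sym2.mem_iff] at this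
                rcases this with h1 | h1
                · exact (Adj.ne hadjxc) h1
                · -- a1 = c3 : contradicts path support nodup
                  have hnodup := hw.support_nodup
                  simp only [Walk.support_cons, List.nodup_cons] at hnodup
                  exact hnodup.1 (by rw [h1]; exact List.mem_cons_of_mem _ (Walk.start_mem_support rest2))
              exact ⟨c, _, _, hedge1, hedge2, hne, Sym2.mem_mk_right _ _, Sym2.mem_mk_left _ _⟩
          · exact ⟨a1, _, _, hq1, hedge1, fun h => heq h.symm, Sym2.mem_mk_left _ _,
              Sym2.mem_mk_left _ _⟩
    obtain ⟨x, q1, q2, hq1, hq2, hq12, hxq1, hxq2⟩ := hx2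
    -- step 2 : not a star, so some edge avoids x ; connect x to it
    have hnost : ∃ q' ∈ S, x ∉ q' := by
      by_contra hcon
      push_neg at hcon
      exact hnotstar ⟨x, hcon⟩
    obtain ⟨q', hq'S, hxq'⟩ := hnost
    obtain ⟨d1, d2, rfl⟩ : ∃ a b, q' = s(a, b) := sym2_exists q'
    have hd1s : d1 ∈ suppF S := mem_suppF.2 ⟨_, hq'S, Sym2.mem_mk_left _ _⟩
    have hxs : x ∈ suppF S := mem_suppF.2 ⟨_, hq1, hxq1⟩
    have hxd1 : x ≠ d1 := fun h => hxq' (h ▸ Sym2.mem_mk_left _ _)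
    obtain ⟨p⟩ := hconn x hxs d1 hd1s
    obtain ⟨w, hw⟩ := p.toPath
    -- internal edge from the path
    have hint : ∃ a b, s(a, b) ∈ S ∧ a ≠ b ∧
        (∃ qa ∈ S, qa ≠ s(a, b) ∧ a ∈ qa) ∧ (∃ qb ∈ S, qb ≠ s(a, b) ∧ b ∈ qb) := by
      cases w with
      | nil => exact absurd rfl hxd1
      | @cons _ c _ hadjxc rest =>
        have hedge1 : s(x, c) ∈ S := ((fromEdgeSet_adj _).1 hadjxc).1
        have hqa : ∃ qa ∈ S, qa ≠ s(x, c) ∧ x ∈ qa := by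
          by_cases h1 : q1 = s(x, c)
          · exact ⟨q2, hq2, fun h => hq12 (h1.trans h.symm), hxq2⟩
          · exact ⟨q1, hq1, h1, hxq1⟩
        cases rest with
        | nil =>
          -- c = d1 : single-edge path ; q' works for the d1 side
          refine ⟨x, d1, hedge1, Adj.ne hadjxc, hqa, ⟨s(d1, d2), hq'S, ?_, Sym2.mem_mk_left _ _⟩⟩
          intro h
          exact hxq' (h ▸ Sym2.mem_mk_left x d1)
        | @cons _ c3 _ hadjcc3 rest2 =>
          have hedge2 : s(c, c3) ∈ S := ((fromEdgeSet_adj _).1 hadjcc3).1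
          refine ⟨x, c, hedge1, Adj.ne hadjxc, hqa, ⟨s(c, c3), hedge2, ?_, Sym2.mem_mk_left _ _⟩⟩
          intro h
          have : c3 ∈ s(x, c) := h ▸ Sym2.mem_mk_right _ _
          rw [Sym2.mem_iff] at this
          rcases this with h1 | h1
          · have hnodup := hw.support_nodup
            simp only [Walk.support_cons, List.nodup_cons] at hnodup
            exact hnodup.1 (by rw [← h1]; exact List.mem_cons_of_mem _ (Walk.start_mem_support rest2))
          · exact (Adj.ne hadjcc3) h1.symm
    obtain ⟨a, b, hq0S, hab, ⟨qa, hqaS, hqane, haqa⟩, ⟨qb, hqbS, hqbne, hbqb⟩⟩ := hint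
    -- step 3 : split at the bridge s(a,b)
    set q0 : Sym2 (Fin n) := s(a, b) with hq0
    set H' := fromEdgeSet (↑(S.erase q0) : Set (Sym2 (Fin n))) with hH'
    have hH'le : H' ≤ H \ fromEdgeSet {q0} := by
      intro y z hyz
      rw [hH', fromEdgeSet_adj] at hyz
      rw [sdiff_adj, hH, fromEdgeSet_adj, fromEdgeSet_adj]
      have hyz1 : s(y, z) ∈ S.erase q0 := by exact_mod_cast hyz.1
      refine ⟨⟨by exact_mod_cast Finset.mem_of_mem_erase hyz1, hyz.2⟩, fun hcon => ?_⟩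
      have := hcon.1
      simp only [Set.mem_singleton_iff] at this
      exact (Finset.ne_of_mem_erase hyz1) this
    have hbr : ¬ (H \ fromEdgeSet {q0}).Reachable a b := by
      have hmem : q0 ∈ H.edgeSet := by
        rw [hH, edgeSet_fromEdgeSet, Set.mem_diff]
        exact ⟨hq0S, fun hd => (hnd _ hq0S) hd⟩
      have := (isAcyclic_iff_forall_edge_isBridge.1 hacyc) hmem
      rw [hq0, isBridge_iff] at this
      exact this
    have hnr : ¬ H'.Reachable a b := fun h => hbr (h.mono hH'le)
    have hndE : ∀ q ∈ S.erase q0, ¬ q.IsDiag := fun q hq => hnd q (Finset.mem_of_mem_erase hq)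
    set A := (S.erase q0).filter (fun q => ∀ z ∈ q, H'.Reachable a z) with hA
    set B := (S.erase q0) \ A with hB
    have hAE : A ⊆ S.erase q0 := Finset.filter_subset _ _
    refine ⟨A, B, ?_, ?_, ?_, Finset.disjoint_sdiff, Or.inr ⟨q0, hq0S, ?_, ?_⟩⟩
    · have hqaE : qa ∈ S.erase q0 := Finset.mem_erase.2 ⟨hqane, hqaS⟩
      exact ⟨qa, Finset.mem_filter.2 ⟨hqaE, fun z hz => reach_in_edge hqaE (hndE _ hqaE) haqa hz⟩⟩
    · have hqbE : qb ∈ S.erase q0 := Finset.mem_erase.2 ⟨hqbne, hqbS⟩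
      refine ⟨qb, Finset.mem_sdiff.2 ⟨hqbE, fun hmem => ?_⟩⟩
      exact hnr ((Finset.mem_filter.1 hmem).2 b hbqb)
    · rw [Finset.disjoint_left]
      intro v hvA hvB
      obtain ⟨qA, hqA, hvqA⟩ := mem_suppF.1 hvA
      obtain ⟨qB, hqB, hvqB⟩ := mem_suppF.1 hvB
      have hreach : H'.Reachable a v := (Finset.mem_filter.1 hqA).2 v hvqA
      rw [hB, Finset.mem_sdiff] at hqB
      refine hqB.2 (Finset.mem_filter.2 ⟨hqB.1, fun z hz => ?_⟩)
      exact hreach.trans (reach_in_edge hqB.1 (hndE _ hqB.1) hvqB hz)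
    · rw [hB, Finset.union_sdiff_of_subset hAE]
      exact Finset.notMem_erase _ _
    · rw [hB, Finset.union_sdiff_of_subset hAE, Finset.insert_erase hq0S]
  · -- disconnected case
    push_neg at hconn
    obtain ⟨w, hw, w', hw', hnr⟩ := hconn
    set A := S.filter (fun q => ∀ z ∈ q, H.Reachable w z) with hA
    set B := S \ A with hB
    have hAS : A ⊆ S := Finset.filter_subset _ _
    refine ⟨A, B, ?_, ?_, ?_, Finset.disjoint_sdiff, Or.inl ?_⟩
    · obtain ⟨qw, hqw, hwqw⟩ := mem_suppF.1 hw
      exact ⟨qw, Finset.mem_filter.2 ⟨hqw, fun z hz => reach_in_edge hqw (hnd _ hqw) hwqw hz⟩⟩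
    · obtain ⟨qw', hqw', hwqw'⟩ := mem_suppF.1 hw'
      refine ⟨qw', Finset.mem_sdiff.2 ⟨hqw', fun hmem => ?_⟩⟩
      exact hnr ((Finset.mem_filter.1 hmem).2 w' hwqw')
    · rw [Finset.disjoint_left]
      intro v hvA hvB
      obtain ⟨qa, hqa, hvqa⟩ := mem_suppF.1 hvA
      obtain ⟨qb, hqb, hvqb⟩ := mem_suppF.1 hvB
      have hreach : H.Reachable w v := (Finset.mem_filter.1 hqa).2 v hvqa
      rw [hB, Finset.mem_sdiff] at hqb
      refine hqb.2 (Finset.mem_filter.2 ⟨hqb.1, fun z hz => ?_⟩)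
      exact hreach.trans (reach_in_edge hqb.1 (hnd _ hqb.1) hvqb hz)
    · rw [hB, Finset.union_sdiff_of_subset hAS]

end graph


section star
variable {n k : ℕ}

noncomputable def edgeC (u : Fin k → Fin n → ℝ) : Sym2 (Fin n) → ℝ :=
  Sym2.lift ⟨fun a b => ∑ i, (u i a - u i b)^2,
    fun a b => Finset.sum_congr rfl fun i _ => by ring⟩

lemma edgeC_mk (u : Fin k → Fin n → ℝ) (a b : Fin n) :
    edgeC u s(a, b) = ∑ i, (u i a - u i b)^2 := rfl

lemma edgeC_expand (u : Fin k → Fin n → ℝ) (a b : Fin n) :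
    edgeC u s(a, b) = xd u a + xd u b - 2 * pd u a b := by
  rw [edgeC_mk, xd, xd, pd, ← Finset.sum_add_distrib, Finset.mul_sum, ← Finset.sum_sub_distrib]
  exact Finset.sum_congr rfl fun i _ => by ring

lemma edgeC_nonneg (u : Fin k → Fin n → ℝ) (q : Sym2 (Fin n)) : 0 ≤ edgeC u q := by
  obtain ⟨a, b, rfl⟩ := sym2_exists q
  rw [edgeC_mk]
  exact Finset.sum_nonneg fun i _ => sq_nonneg _


lemma edgeC_le_two (u : Fin k → Fin n → ℝ)
    (horth : ∀ i j, (∑ a, u i a * u j a) = if i = j then (1:ℝ) else 0)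
    {q : Sym2 (Fin n)} (hq : ¬ q.IsDiag) : edgeC u q ≤ 2 := by
  obtain ⟨a, b, rfl⟩ := sym2_exists q
  rw [Sym2.mk_isDiag_iff] at hq
  exact edge_le_two u horth hq

lemma star_bound (u : Fin k → Fin n → ℝ)
    (horth : ∀ i j, (∑ a, u i a * u j a) = if i = j then (1:ℝ) else 0)
    (S : Finset (Sym2 (Fin n))) (hnd : ∀ q ∈ S, ¬ q.IsDiag) (hne : S.Nonempty)
    (v : Fin n) (hstar : ∀ q ∈ S, v ∈ q) :
    ∑ q ∈ S, edgeC u q ≤ (S.card : ℝ) + 2 * (∑ w ∈ suppF S, xd u w) - 1 := by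
  set L : Finset (Fin n) := (suppF S).erase v with hL
  have hvL : v ∉ L := Finset.notMem_erase _ _
  have hSL : ∀ q ∈ S, ∃ l ∈ L, q = s(v, l) := by
    intro q hq
    obtain ⟨a, b, rfl⟩ := sym2_exists q
    have hv := hstar _ hq
    rw [Sym2.mem_iff] at hv
    have hndq := hnd _ hq
    rcases hv with rfl | rfl
    · have hb : b ≠ v := fun h => hndq (by rw [h]; exact Sym2.mk_isDiag_iff.2 rfl)
      exact ⟨b, Finset.mem_erase.2 ⟨hb, mem_suppF.2 ⟨_, hq, Sym2.mem_mk_right _ _⟩⟩, rfl⟩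
    · have ha : a ≠ v := fun h => hndq (by rw [h]; exact Sym2.mk_isDiag_iff.2 rfl)
      exact ⟨a, Finset.mem_erase.2 ⟨ha, mem_suppF.2 ⟨_, hq, Sym2.mem_mk_left _ _⟩⟩, Sym2.eq_swap⟩
  have hLS : ∀ l ∈ L, s(v, l) ∈ S := by
    intro l hl
    rw [hL, Finset.mem_erase, mem_suppF] at hl
    obtain ⟨hlv, q, hq, hlq⟩ := hl
    obtain ⟨l', hl', heq⟩ := hSL q hq
    rw [heq, Sym2.mem_iff] at hlq
    rcases hlq with rfl | rfl
    · exact absurd rfl hlv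
    · rw [← heq]; exact hq
  have himg : S = L.image (fun l => s(v, l)) := by
    ext q
    constructor
    · intro hq
      obtain ⟨l, hl, rfl⟩ := hSL q hq
      exact Finset.mem_image.2 ⟨l, hl, rfl⟩
    · intro hq
      obtain ⟨l, hl, rfl⟩ := Finset.mem_image.1 hq
      exact hLS l hl
  have hinjL : Set.InjOn (fun l => s(v, l)) ↑L := by
    intro l1 _ l2 _ h
    exact (Sym2.congr_right).1 h
  have hcard : S.card = L.card := by rw [himg, Finset.card_image_of_injOn hinjL]
  have hsum : ∑ q ∈ S, edgeC u q = ∑ l ∈ L, edgeC u s(v, l) := by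
    rw [himg, Finset.sum_image (fun a ha b hb h => hinjL ha hb h)]
  have hsupp : suppF S = insert v L := by
    rw [hL]
    have hv : v ∈ suppF S := by
      obtain ⟨q, hq⟩ := hne
      exact mem_suppF.2 ⟨q, hq, hstar q hq⟩
    rw [Finset.insert_erase hv]
  have hLne : L.Nonempty := by
    obtain ⟨q, hq⟩ := hne
    obtain ⟨l, hl, _⟩ := hSL q hq
    exact ⟨l, hl⟩
  -- numeric setup
  set s : ℝ := (L.card : ℝ) with hs
  set x : ℝ := xd u v with hx
  set σ : ℝ := ∑ l ∈ L, xd u l with hσ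
  set Q : ℝ := ∑ l ∈ L, (pd u v l)^2 with hQ
  set R : ℝ := ∑ l ∈ L, (- pd u v l) with hR
  have hLc1 : 1 ≤ L.card := hLne.card_pos
  have hs1 : 1 ≤ s := by rw [hs]; exact_mod_cast hLc1
  have hsint : s = 1 ∨ 2 ≤ s := by
    have : L.card = 1 ∨ 2 ≤ L.card := by omega
    rcases this with h | h
    · left; rw [hs, h]; norm_num
    · right; rw [hs]; exact_mod_cast h
  have hx0 : 0 ≤ x := xd_nonneg u v
  have hx1 : x ≤ 1 := xd_le_one u horth v
  have hσ0 : 0 ≤ σ := Finset.sum_nonneg fun l _ => xd_nonneg u l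
  have hQ0 : 0 ≤ Q := Finset.sum_nonneg fun l _ => sq_nonneg _
  have hQ1 : Q ≤ x - x^2 := by
    have hsub : L ⊆ Finset.univ.erase v := by
      intro l hl
      exact Finset.mem_erase.2 ⟨(Finset.mem_erase.1 hl).1, Finset.mem_univ _⟩
    have h1 : Q ≤ ∑ w ∈ Finset.univ.erase v, (pd u v w)^2 :=
      Finset.sum_le_sum_of_subset_of_nonneg hsub (fun w _ _ => sq_nonneg _)
    have h2 : ∑ w ∈ Finset.univ.erase v, (pd u v w)^2
        = (∑ w, (pd u v w)^2) - (pd u v v)^2 :=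
      Finset.sum_erase_eq_sub (Finset.mem_univ v)
    have h3 : pd u v v = xd u v := Finset.sum_congr rfl fun i _ => by rw [sq]
    rw [h2, pd_row u horth v, h3] at h1
    rw [hx]
    exact h1
  have hQ2 : Q ≤ x * σ := by
    rw [hσ, Finset.mul_sum]
    refine Finset.sum_le_sum fun l _ => ?_
    have := Finset.sum_mul_sq_le_sq_mul_sq Finset.univ (fun i => u i v) (fun i => u i l)
    calc (pd u v l)^2 = (∑ i, u i v * u i l)^2 := rfl
      _ ≤ (∑ i, (u i v)^2) * (∑ i, (u i l)^2) := this
      _ = x * xd u l := rfl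
  have hRQ : R^2 ≤ s * Q := by
    have := Finset.sum_mul_sq_le_sq_mul_sq L (fun _ => (1:ℝ)) (fun l => - pd u v l)
    simp only [one_mul, one_pow] at this
    have h1 : (∑ _l ∈ L, (1:ℝ)) = s := by rw [Finset.sum_const]; simp [hs]
    have h2 : ∑ l ∈ L, (- pd u v l)^2 = Q := by
      rw [hQ]; exact Finset.sum_congr rfl fun l _ => by ring
    rw [h1, h2] at this
    exact this
  have key := star_scalar s x σ Q R hs1 hsint hx0 hx1 hσ0 hQ0 hQ1 hQ2 hRQ
  -- final assembly
  have hexp : ∑ q ∈ S, edgeC u q = s * x + σ + 2 * R := by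
    rw [hsum]
    have : ∀ l ∈ L, edgeC u s(v, l) = x + xd u l + 2 * (- pd u v l) := by
      intro l _
      rw [edgeC_expand]; ring
    rw [Finset.sum_congr rfl this, Finset.sum_add_distrib, Finset.sum_add_distrib,
      Finset.sum_const, ← Finset.mul_sum]
    simp [hs, hσ, hR, nsmul_eq_mul]
    try ring
  have hsupps : ∑ w ∈ suppF S, xd u w = x + σ := by
    rw [hsupp, Finset.sum_insert hvL, hx, hσ]
  rw [hexp, hsupps, hcard]
  rw [← hs]
  linarith
end star


section ind
variable {n k : ℕ}

lemma acyclic_mono {G H : SimpleGraph (Fin n)} (hle : H ≤ G) (hg : G.IsAcyclic) : H.IsAcyclic :=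
  fun _ c hc => hg (c.mapLe hle) (hc.mapLe hle)

lemma forest_bound (u : Fin k → Fin n → ℝ)
    (horth : ∀ i j, (∑ a, u i a * u j a) = if i = j then (1:ℝ) else 0)
    (S : Finset (Sym2 (Fin n))) :
    (∀ q ∈ S, ¬ q.IsDiag) → (fromEdgeSet (↑S : Set (Sym2 (Fin n)))).IsAcyclic → S.Nonempty →
    ∑ q ∈ S, edgeC u q ≤ (S.card : ℝ) + 2 * (∑ w ∈ suppF S, xd u w) - 1 := by
  induction S using Finset.strongInductionOn with
  | _ S ih =>
    intro hnd hacyc hne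
    by_cases hstar : ∃ v, ∀ q ∈ S, v ∈ q
    · obtain ⟨v, hv⟩ := hstar
      exact star_bound u horth S hnd hne v hv
    · have h2 : 2 ≤ S.card := by
        by_contra h
        push_neg at h
        have h1 : S.card = 1 := le_antisymm (by omega) hne.card_pos
        obtain ⟨q, rfl⟩ := Finset.card_eq_one.1 h1
        obtain ⟨a, b, rfl⟩ := sym2_exists q
        exact hstar ⟨a, fun q' hq' => by
          rw [Finset.mem_singleton] at hq'; rw [hq']; exact Sym2.mem_mk_left _ _⟩
      obtain ⟨A, B, hAne, hBne, hsuppd, hABd, hcase⟩ := struct S hnd hacyc h2 hstar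
      have hABsub : A ∪ B ⊆ S := by
        rcases hcase with h | ⟨q0, hq0S, hq0AB, h⟩
        · rw [h]
        · rw [h]; exact Finset.subset_insert _ _
      have hAS : A ⊆ S := (Finset.subset_union_left).trans hABsub
      have hBS : B ⊆ S := (Finset.subset_union_right).trans hABsub
      have hAss : A ⊂ S := by
        obtain ⟨b, hb⟩ := hBne
        refine Finset.ssubset_iff_of_subset hAS |>.2 ⟨b, hBS hb, ?_⟩
        exact fun hbA => (Finset.disjoint_left.1 hABd) hbA hb
      have hBss : B ⊂ S := by
        obtain ⟨a, ha⟩ := hAne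
        refine Finset.ssubset_iff_of_subset hBS |>.2 ⟨a, hAS ha, ?_⟩
        exact fun haB => (Finset.disjoint_left.1 hABd) ha haB
      have hndA : ∀ q ∈ A, ¬ q.IsDiag := fun q hq => hnd q (hAS hq)
      have hndB : ∀ q ∈ B, ¬ q.IsDiag := fun q hq => hnd q (hBS hq)
      have hacycA : (fromEdgeSet (↑A : Set (Sym2 (Fin n)))).IsAcyclic :=
        acyclic_mono (fromEdgeSet_mono (by exact_mod_cast hAS)) hacyc
      have hacycB : (fromEdgeSet (↑B : Set (Sym2 (Fin n)))).IsAcyclic :=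
        acyclic_mono (fromEdgeSet_mono (by exact_mod_cast hBS)) hacyc
      have IHA := ih A hAss hndA hacycA hAne
      have IHB := ih B hBss hndB hacycB hBne
      -- support sums
      have hsupple : (∑ w ∈ suppF A, xd u w) + (∑ w ∈ suppF B, xd u w)
          ≤ ∑ w ∈ suppF S, xd u w := by
        rw [← Finset.sum_union hsuppd]
        refine Finset.sum_le_sum_of_subset_of_nonneg ?_ (fun w _ _ => xd_nonneg u w)
        exact Finset.union_subset (suppF_mono hAS) (suppF_mono hBS)
      rcases hcase with h | ⟨q0, hq0S, hq0AB, h⟩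
      · rw [h, Finset.sum_union hABd]
        have hcard : S.card = A.card + B.card := by
          rw [h, Finset.card_union_of_disjoint hABd]
        rw [← h, hcard]
        push_cast
        linarith
      · rw [h, Finset.sum_insert hq0AB, Finset.sum_union hABd]
        have hcard : S.card = A.card + B.card + 1 := by
          rw [h, Finset.card_insert_of_notMem hq0AB, Finset.card_union_of_disjoint hABd]
        have hq0le := edgeC_le_two u horth (hnd q0 hq0S)
        rw [← h, hcard]
        push_cast
        linarith
end ind


/-- generic summation-by-parts bound -/
lemma abel_bound (N : ℕ) (ω : ℕ → ℝ) (hmono : Antitone ω) (hnneg : ∀ j, 0 ≤ ω j)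
    (c : ℕ → ℝ) (g : ℕ → ℝ) (hg0 : g 0 = 0)
    (hC : ∀ r, r ≤ N → (∑ j ∈ Finset.range r, c j) ≤ g r) :
    ∑ j ∈ Finset.range N, ω j * c j ≤ ∑ j ∈ Finset.range N, ω j * (g (j+1) - g j) := by
  have key : ∀ M : ℕ, M ≤ N →
      ∑ j ∈ Finset.range M, ω j * c j - ∑ j ∈ Finset.range M, ω j * (g (j+1) - g j)
      ≤ ω M * ((∑ j ∈ Finset.range M, c j) - g M) := by
    intro M
    induction M with
    | zero => intro _; simp [hg0]
    | succ M ihM =>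
      intro hMN
      have ihM := ihM (le_trans (Nat.le_succ M) hMN)
      have hCs : ∑ j ∈ Finset.range (M+1), c j = (∑ j ∈ Finset.range M, c j) + c M :=
        Finset.sum_range_succ _ _
      have hle : (∑ j ∈ Finset.range M, c j) + c M - g (M+1) ≤ 0 := by
        have := hC (M+1) hMN; rw [hCs] at this; linarith
      have hω : ω (M+1) ≤ ω M := hmono (Nat.le_succ M)
      have h1 : ω M * ((∑ j ∈ Finset.range M, c j) + c M - g (M+1))
          ≤ ω (M+1) * ((∑ j ∈ Finset.range M, c j) + c M - g (M+1)) :=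
        mul_le_mul_of_nonpos_right hω hle
      rw [Finset.sum_range_succ, Finset.sum_range_succ, hCs]
      have e : (∑ j ∈ Finset.range M, ω j * c j) + ω M * c M
          - ((∑ j ∈ Finset.range M, ω j * (g (j+1) - g j)) + ω M * (g (M+1) - g M))
          = ((∑ j ∈ Finset.range M, ω j * c j) - (∑ j ∈ Finset.range M, ω j * (g (j+1) - g j)))
            + ω M * (c M - (g (M+1) - g M)) := by ring
      have e2 : ω M * ((∑ j ∈ Finset.range M, c j) - g M) + ω M * (c M - (g (M+1) - g M))
          = ω M * ((∑ j ∈ Finset.range M, c j) + c M - g (M+1)) := by ring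
      linarith [ihM]
  have := key N le_rfl
  have h2 : (∑ j ∈ Finset.range N, c j) - g N ≤ 0 := by have := hC N le_rfl; linarith
  nlinarith [hnneg N]

/-- the specific step function -/
noncomputable def gfun (k : ℕ) (r : ℕ) : ℝ := min (2*(r:ℝ)) ((r:ℝ) + (2*(k:ℝ) - 1))

lemma gfun_zero (k : ℕ) (hk : 1 ≤ k) : gfun k 0 = 0 := by
  have : (1:ℝ) ≤ (k:ℝ) := by exact_mod_cast hk
  simp [gfun]
  linarith

lemma gfun_step (k : ℕ) (hk : 1 ≤ k) (j : ℕ) :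
    gfun k (j+1) - gfun k j = if j < 2*k - 1 then 2 else 1 := by
  have hk' : (1:ℝ) ≤ (k:ℝ) := by exact_mod_cast hk
  by_cases h : j < 2*k - 1
  · have hj : (j:ℝ) + 1 ≤ 2*(k:ℝ) - 1 := by
      have : j + 1 ≤ 2*k - 1 := h
      have h2 : (j:ℝ) + 1 ≤ ((2*k - 1 : ℕ):ℝ) := by exact_mod_cast this
      have h3 : ((2*k - 1 : ℕ):ℝ) = 2*(k:ℝ) - 1 := by
        have : (1:ℕ) ≤ 2*k := by omega
        push_cast [Nat.cast_sub this]
        ring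
      linarith [h2, h3.symm.le]
    have e1 : gfun k (j+1) = 2*((j:ℝ)+1) := by
      rw [gfun]; push_cast; rw [min_eq_left]; linarith
    have e2 : gfun k j = 2*(j:ℝ) := by
      rw [gfun]; rw [min_eq_left]; linarith
    rw [e1, e2, if_pos h]; ring
  · have hj : 2*(k:ℝ) - 1 ≤ (j:ℝ) := by
      have : 2*k - 1 ≤ j := by omega
      have h2 : ((2*k - 1:ℕ):ℝ) ≤ (j:ℝ) := by exact_mod_cast this
      have h3 : ((2*k - 1 : ℕ):ℝ) = 2*(k:ℝ) - 1 := by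
        have : (1:ℕ) ≤ 2*k := by omega
        push_cast [Nat.cast_sub this]
        ring
      linarith [h2, h3.symm.le]
    have e1 : gfun k (j+1) = ((j:ℝ)+1) + (2*(k:ℝ) - 1) := by
      rw [gfun]; push_cast; rw [min_eq_right]; linarith
    have e2 : gfun k j = (j:ℝ) + (2*(k:ℝ) - 1) := by
      rw [gfun]; rw [min_eq_right]; linarith
    rw [e1, e2, if_neg h]; ring

lemma step_sum (N k : ℕ) (hk : 1 ≤ k) (ω : ℕ → ℝ) (hnneg : ∀ j, 0 ≤ ω j) :
    ∑ j ∈ Finset.range N, ω j * (gfun k (j+1) - gfun k j)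
      ≤ (∑ j ∈ Finset.range N, ω j) + ∑ j ∈ Finset.range (2*k - 1), ω j := by
  have e1 : ∀ j ∈ Finset.range N, ω j * (gfun k (j+1) - gfun k j)
      = ω j + (if j < 2*k-1 then ω j else 0) := by
    intro j _
    rw [gfun_step k hk j]
    by_cases h : j < 2*k-1 <;> simp [h] <;> ring
  rw [Finset.sum_congr rfl e1, Finset.sum_add_distrib]
  have e2 : ∑ j ∈ Finset.range N, (if j < 2*k-1 then ω j else 0)
      = ∑ j ∈ (Finset.range N).filter (fun j => j < 2*k-1), ω j := by
    rw [Finset.sum_filter]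
  have e3 : (Finset.range N).filter (fun j => j < 2*k-1) ⊆ Finset.range (2*k-1) := by
    intro j hj
    rw [Finset.mem_filter] at hj
    exact Finset.mem_range.2 hj.2
  have e4 : ∑ j ∈ (Finset.range N).filter (fun j => j < 2*k-1), ω j
      ≤ ∑ j ∈ Finset.range (2*k-1), ω j :=
    Finset.sum_le_sum_of_subset_of_nonneg e3 (fun j _ _ => hnneg j)
  rw [e2]
  linarith

end auxiliary

open Finset SimpleGraph
open scoped Classical

/-- Weighted Brouwer bound for trees: for a weighted tree `T` on `n` vertices with
nonnegative edge weights `ω 0 ≥ ω 1 ≥ ⋯ ≥ ω (n-2) ≥ 0` (extended by zeros),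
the sum of the `k` largest Laplacian eigenvalues is at most
`e(T) + Σ_{i=1}^{2k-1} ω_i`. -/
theorem weighted_brouwer_for_trees {n : ℕ}
    (G : SimpleGraph (Fin n)) (hG : G.IsTree)
    (A : Matrix (Fin n) (Fin n) ℝ) (hsym : A.IsSymm)
    (hsupp : ∀ i j, ¬ G.Adj i j → A i j = 0)
    (hnonneg : ∀ i j, 0 ≤ A i j)
    -- `ω 0, ω 1, …` lists the edge weights in decreasing order, extended by zeros
    (ω : ℕ → ℝ) (hmono : Antitone ω)
    (hzero : ∀ i, n - 1 ≤ i → ω i = 0)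
    (e : Fin (n - 1) → Fin n × Fin n)
    (hadj : ∀ i, G.Adj (e i).1 (e i).2)
    (hw : ∀ i : Fin (n - 1), ω i = A (e i).1 (e i).2)
    (hinj : ∀ i j : Fin (n - 1), s((e i).1, (e i).2) = s((e j).1, (e j).2) → i = j)
    (hsurj : ∀ a b : Fin n, G.Adj a b → ∃ i, s((e i).1, (e i).2) = s(a, b))
    (k : ℕ) (hk1 : 1 ≤ k) (hk2 : k ≤ n)
    (u : Fin k → Fin n → ℝ)
    (horth : ∀ i j, u i ⬝ᵥ u j = if i = j then 1 else 0) :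
    ∑ i, u i ⬝ᵥ (lap A).mulVec (u i) ≤
      (∑ i ∈ Finset.range (n - 1), ω i) + ∑ i ∈ Finset.range (2 * k - 1), ω i := by
  have horth' : ∀ i j, (∑ a, u i a * u j a) = if i = j then (1:ℝ) else 0 := by
    intro i j
    have := horth i j
    simpa [dotProduct] using this
  have hωnneg : ∀ j, 0 ≤ ω j := by
    intro j
    have h1 : ω (n - 1 + j) = 0 := hzero _ (Nat.le_add_right _ _)
    have h2 : ω (n - 1 + j) ≤ ω j := hmono (Nat.le_add_left _ _)
    linarith
  -- quadratic form identity
  have quad : ∀ w : Fin n → ℝ,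
      w ⬝ᵥ (lap A).mulVec w = (1/2) * ∑ a, ∑ b, A a b * (w a - w b)^2 := by
    intro w
    have hAs : ∀ a b, A b a = A a b := fun a b => hsym.apply a b
    have lhs1 : w ⬝ᵥ (lap A).mulVec w
        = (∑ a, ∑ b, A a b * (w a)^2) - ∑ a, ∑ b, A a b * (w a * w b) := by
      rw [lap, Matrix.sub_mulVec, dotProduct_sub]
      congr 1
      · rw [dotProduct]
        refine Finset.sum_congr rfl fun a _ => ?_
        rw [Matrix.mulVec_diagonal, Finset.sum_mul, Finset.mul_sum]
        refine Finset.sum_congr rfl fun b _ => by ring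
      · rw [dotProduct]
        refine Finset.sum_congr rfl fun a _ => ?_
        rw [Matrix.mulVec, dotProduct, Finset.mul_sum]
        refine Finset.sum_congr rfl fun b _ => by ring
    have swap1 : ∑ a, ∑ b, A a b * (w b)^2 = ∑ a, ∑ b, A a b * (w a)^2 := by
      rw [Finset.sum_comm]
      refine Finset.sum_congr rfl fun a _ => Finset.sum_congr rfl fun b _ => by rw [hAs]
    have rhs1 : (∑ a, ∑ b, A a b * (w a - w b)^2)
        = (∑ a, ∑ b, A a b * (w a)^2) + (∑ a, ∑ b, A a b * (w b)^2)
          - 2 * ∑ a, ∑ b, A a b * (w a * w b) := by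
      rw [← Finset.sum_add_distrib, Finset.mul_sum, ← Finset.sum_sub_distrib]
      refine Finset.sum_congr rfl fun a _ => ?_
      rw [← Finset.sum_add_distrib, Finset.mul_sum, ← Finset.sum_sub_distrib]
      refine Finset.sum_congr rfl fun b _ => by ring
    rw [lhs1, rhs1, swap1]
    ring
  rw [Finset.sum_congr rfl fun i _ => quad (u i), ← Finset.mul_sum]
  -- swap the sums : total = (1/2) * ∑ a ∑ b A a b * cC a b
  have swap2 : ∑ i, ∑ a, ∑ b, A a b * (u i a - u i b)^2
      = ∑ a, ∑ b, A a b * edgeC u s(a, b) := by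
    rw [Finset.sum_comm]
    refine Finset.sum_congr rfl fun a _ => ?_
    rw [Finset.sum_comm]
    refine Finset.sum_congr rfl fun b _ => ?_
    rw [edgeC_mk, Finset.mul_sum]
  rw [swap2]
  -- restrict to adjacent pairs and reindex by Fin (n-1) × Bool
  have hAdiag : ∀ a, A a a = 0 := fun a => hsupp a a (G.irrefl)
  set F : Fin n × Fin n → ℝ := fun p => A p.1 p.2 * edgeC u s(p.1, p.2) with hF
  have step1 : ∑ a, ∑ b, A a b * edgeC u s(a, b)
      = ∑ p ∈ Finset.univ.filter (fun p : Fin n × Fin n => G.Adj p.1 p.2), F p := by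
    rw [← Finset.sum_product', ← Finset.univ_product_univ]
    symm
    refine Finset.sum_subset (Finset.filter_subset _ _) ?_
    intro p _ hp
    have hnadj : ¬ G.Adj p.1 p.2 := by
      intro h
      exact hp (Finset.mem_filter.2 ⟨Finset.mem_univ _, h⟩)
    rw [hF]
    simp only
    rw [hsupp _ _ hnadj, zero_mul]
  rw [step1]
  set φ : Fin (n-1) × Bool → Fin n × Fin n :=
    fun z => cond z.2 (e z.1) ((e z.1).2, (e z.1).1) with hφ
  have hφ1 : ∀ z, s((φ z).1, (φ z).2) = s((e z.1).1, (e z.1).2) := by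
    intro z
    rcases z with ⟨j, b⟩
    cases b
    · exact Sym2.eq_swap
    · rfl
  have step2 : ∑ p ∈ Finset.univ.filter (fun p : Fin n × Fin n => G.Adj p.1 p.2), F p
      = ∑ z : Fin (n-1) × Bool, F (φ z) := by
    symm
    refine Finset.sum_bij (fun z _ => φ z) ?_ ?_ ?_ ?_
    · intro z _
      refine Finset.mem_filter.2 ⟨Finset.mem_univ _, ?_⟩
      rcases z with ⟨j, b⟩
      cases b
      · exact (hadj j).symm
      · exact hadj j
    · intro z1 hz1 z2 hz2 heq
      have heq' : φ z1 = φ z2 := heq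
      have hsym2 : s((e z1.1).1, (e z1.1).2) = s((e z2.1).1, (e z2.1).2) := by
        rw [← hφ1 z1, ← hφ1 z2, heq']
      have hj : z1.1 = z2.1 := hinj _ _ hsym2
      have hne1 : (e z1.1).1 ≠ (e z1.1).2 := (hadj z1.1).ne
      rcases z1 with ⟨j1, b1⟩
      rcases z2 with ⟨j2, b2⟩
      simp only at hj
      subst hj
      simp only at hne1
      cases b1 <;> cases b2
      · rfl
      · exact absurd (congrArg Prod.fst heq').symm hne1
      · exact absurd (congrArg Prod.fst heq') hne1
      · rfl
    · intro p hp
      have hadjp : G.Adj p.1 p.2 := (Finset.mem_filter.1 hp).2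
      obtain ⟨j, hj⟩ := hsurj p.1 p.2 hadjp
      rw [Sym2.eq_iff] at hj
      rcases hj with ⟨h1, h2⟩ | ⟨h1, h2⟩
      · refine ⟨(j, true), Finset.mem_univ _, ?_⟩
        exact Prod.ext h1 h2
      · refine ⟨(j, false), Finset.mem_univ _, ?_⟩
        exact Prod.ext h2 h1
    · intro z _
      rfl
  rw [step2]
  have hFsym : ∀ j : Fin (n-1), F ((e j).2, (e j).1) = F (e j) := by
    intro j
    rw [hF]
    simp only
    rw [hsym.apply, Sym2.eq_swap]
  have step3 : ∑ z : Fin (n-1) × Bool, F (φ z) = 2 * ∑ j : Fin (n-1), F (e j) := by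
    rw [Fintype.sum_prod_type, Finset.mul_sum]
    refine Finset.sum_congr rfl fun j _ => ?_
    rw [Fintype.sum_bool]
    show F (e j) + F ((e j).2, (e j).1) = 2 * F (e j)
    rw [hFsym j]
    ring
  rw [step3]
  -- convert to a range sum
  set c' : ℕ → ℝ := fun r => if h : r < n-1 then edgeC u s((e ⟨r,h⟩).1, (e ⟨r,h⟩).2) else 0
    with hc'
  have hFj : ∀ j : Fin (n-1), F (e j) = ω ↑j * c' ↑j := by
    intro j
    simp only [hF, hc']
    rw [dif_pos j.isLt]
    have heta : (⟨↑j, j.isLt⟩ : Fin (n-1)) = j := Fin.eta j j.isLt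
    rw [heta, ← hw j]
  have step4 : ∑ j : Fin (n-1), F (e j) = ∑ r ∈ Finset.range (n-1), ω r * c' r := by
    rw [Finset.sum_congr rfl fun j _ => hFj j]
    exact Fin.sum_univ_eq_sum_range (fun r => ω r * c' r) (n-1)
  rw [step4]
  have main_eq : 1/2 * (2 * ∑ r ∈ Finset.range (n-1), ω r * c' r)
      = ∑ r ∈ Finset.range (n-1), ω r * c' r := by ring
  rw [main_eq]
  -- prefix bounds
  have hc'le2 : ∀ r, c' r ≤ 2 := by
    intro r
    simp only [hc']
    by_cases h : r < n-1
    · rw [dif_pos h]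
      refine edgeC_le_two u horth' ?_
      rw [Sym2.mk_isDiag_iff]
      exact (hadj _).ne
    · rw [dif_neg h]; norm_num
  have hc'nneg : ∀ r, 0 ≤ c' r := by
    intro r
    simp only [hc']
    by_cases h : r < n-1
    · rw [dif_pos h]; exact edgeC_nonneg u _
    · rw [dif_neg h]
  have hxdtot : ∑ w : Fin n, xd u w = (k:ℝ) := by
    have e1 : ∀ w : Fin n, xd u w = ∑ i, (u i w)^2 := fun w => rfl
    rw [Finset.sum_congr rfl fun w _ => e1 w, Finset.sum_comm]
    have e2 : ∀ i : Fin k, (∑ w, (u i w)^2) = 1 := by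
      intro i
      have h := horth' i i
      rw [if_pos rfl] at h
      rw [← h]
      exact Finset.sum_congr rfl fun w _ => by rw [sq]
    rw [Finset.sum_congr rfl fun i _ => e2 i, Finset.sum_const, Finset.card_univ,
      Fintype.card_fin]
    simp
  have hC : ∀ r, r ≤ n-1 → (∑ t ∈ Finset.range r, c' t) ≤ gfun k r := by
    intro r hr
    have hB1 : (∑ t ∈ Finset.range r, c' t) ≤ 2*(r:ℝ) := by
      calc ∑ t ∈ Finset.range r, c' t ≤ ∑ _t ∈ Finset.range r, (2:ℝ) :=
            Finset.sum_le_sum fun t _ => hc'le2 t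
        _ = 2*(r:ℝ) := by rw [Finset.sum_const, Finset.card_range]; push_cast; ring
    have hB2 : (∑ t ∈ Finset.range r, c' t) ≤ (r:ℝ) + (2*(k:ℝ) - 1) := by
      rcases Nat.eq_zero_or_pos r with rfl | hrpos
      · have hk' : (1:ℝ) ≤ (k:ℝ) := by exact_mod_cast hk1
        simp
        linarith
      · set Jr : Finset (Fin (n-1)) := Finset.univ.filter (fun j => (j:ℕ) < r) with hJr
        set f : Fin (n-1) → Sym2 (Fin n) := fun j => s((e j).1, (e j).2) with hfd
        set Sr : Finset (Sym2 (Fin n)) := Jr.image f with hSrd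
        have hfinj : ∀ j1 ∈ Jr, ∀ j2 ∈ Jr, f j1 = f j2 → j1 = j2 :=
          fun j1 _ j2 _ h => hinj j1 j2 h
        have hsum_r : ∑ t ∈ Finset.range r, c' t = ∑ q ∈ Sr, edgeC u q := by
          rw [hSrd, Finset.sum_image hfinj]
          refine Finset.sum_bij
            (fun t ht => (⟨t, lt_of_lt_of_le (Finset.mem_range.1 ht) hr⟩ : Fin (n-1)))
            ?_ ?_ ?_ ?_
          · intro t ht
            exact Finset.mem_filter.2 ⟨Finset.mem_univ _, Finset.mem_range.1 ht⟩
          · intro t1 h1 t2 h2 hteq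
            exact congrArg Fin.val hteq
          · intro j hj
            exact ⟨(j:ℕ), Finset.mem_range.2 ((Finset.mem_filter.1 hj).2), by simp⟩
          · intro t ht
            simp only [hc']
            rw [dif_pos (lt_of_lt_of_le (Finset.mem_range.1 ht) hr)]
        have hJrcard : Jr.card = r := by
          have : (Finset.range r).card = Jr.card := by
            refine Finset.card_bij
              (fun t ht => (⟨t, lt_of_lt_of_le (Finset.mem_range.1 ht) hr⟩ : Fin (n-1)))
              ?_ ?_ ?_
            · intro t ht
              exact Finset.mem_filter.2 ⟨Finset.mem_univ _, Finset.mem_range.1 ht⟩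
            · intro t1 h1 t2 h2 hteq
              exact congrArg Fin.val hteq
            · intro j hj
              exact ⟨(j:ℕ), Finset.mem_range.2 ((Finset.mem_filter.1 hj).2), by simp⟩
          rw [← this, Finset.card_range]
        have hcardSr : Sr.card = r := by
          rw [hSrd, Finset.card_image_of_injOn (fun a ha b hb h => hfinj a ha b hb h), hJrcard]
        have hndSr : ∀ q ∈ Sr, ¬ q.IsDiag := by
          intro q hq
          obtain ⟨j, _, rfl⟩ := Finset.mem_image.1 hq
          rw [hfd]
          simp only
          rw [Sym2.mk_isDiag_iff]
          exact (hadj j).ne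
        have hle : fromEdgeSet (↑Sr : Set (Sym2 (Fin n))) ≤ G := by
          intro x y hxy
          rw [fromEdgeSet_adj] at hxy
          have hmem : s(x,y) ∈ Sr := by exact_mod_cast hxy.1
          obtain ⟨j, _, hjeq⟩ := Finset.mem_image.1 hmem
          rw [hfd] at hjeq
          simp only at hjeq
          rw [Sym2.eq_iff] at hjeq
          rcases hjeq with ⟨h1, h2⟩ | ⟨h1, h2⟩
          · rw [← h1, ← h2]; exact hadj j
          · rw [← h1, ← h2]; exact (hadj j).symm
        have hacycSr : (fromEdgeSet (↑Sr : Set (Sym2 (Fin n)))).IsAcyclic :=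
          acyclic_mono hle hG.IsAcyclic
        have hSrne : Sr.Nonempty := by
          have h0 : (0:ℕ) < n - 1 := lt_of_lt_of_le hrpos hr
          refine ⟨f ⟨0, h0⟩, Finset.mem_image.2 ⟨⟨0, h0⟩, ?_, rfl⟩⟩
          exact Finset.mem_filter.2 ⟨Finset.mem_univ _, hrpos⟩
        have hforest := forest_bound u horth' Sr hndSr hacycSr hSrne
        have hsuppk : ∑ w ∈ suppF Sr, xd u w ≤ (k:ℝ) := by
          rw [← hxdtot]
          exact Finset.sum_le_sum_of_subset_of_nonneg (Finset.subset_univ _)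
            (fun w _ _ => xd_nonneg u w)
        rw [hsum_r]
        rw [hcardSr] at hforest
        linarith
    exact le_min hB1 hB2
  calc ∑ r ∈ Finset.range (n-1), ω r * c' r
      ≤ ∑ r ∈ Finset.range (n-1), ω r * (gfun k (r+1) - gfun k r) :=
        abel_bound (n-1) ω hmono hωnneg c' (gfun k) (gfun_zero k hk1) hC
    _ ≤ (∑ i ∈ Finset.range (n - 1), ω i) + ∑ i ∈ Finset.range (2 * k - 1), ω i :=
        step_sum (n-1) k hk1 ω hωnneg
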